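/- Let V be a real inner product space and let R : V × V × V × V → ℝ be an algebraic curvature tensor with nonnegative sectional curvatures, i.e., R(x,y,x,y) ≥ 0 for all x, y ∈ V. Let λ, μ ∈ ℝ and let v₁, v₂, v₃, v₄ ∈ V be orthonormal vectors. Suppose that the following three equations hold: (1) R(v₁,v₃,v₁,v₃) + λ²·R(v₁,v₄,v₁,v₄) + μ²·R(v₂,v₃,v₂,v₃) + λ²μ²·R(v₂,v₄,v₂,v₄) − 2λμ·R(v₁,v₂,v₃,v₄) = 0; (2) R(v₁,v₂,v₁,v₂) + λ²·R(v₂,v₄,v₂,v₄) + μ²·R(v₁,v₃,v₁,v₃) + λ²μ²·R(v₃,v₄,v₃,v₄) − 2λμ·R(v₂,v₃,v₁,v₄) = 0; (3) R(v₂,v₃,v₂,v₃) + λ²·R(v₃,v₄,v₃,v₄) + μ²·R(v₁,v₂,v₁,v₂) + λ²μ²·R(v₁,v₄,v₁,v₄) − 2λμ·R(v₃,v₁,v₂,v₄) = 0. Then R(v₁,v₂,v₁,v₂) = 0. -/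
import Mathlib


open scoped RealInnerProductSpace

/-- An algebraic curvature tensor on a real inner product space `V`: a multilinear map
`R : V × V × V × V → ℝ` that is antisymmetric in the first and last pairs of arguments,
symmetric under interchange of the two pairs, and satisfies the first Bianchi identity. -/
structure IsAlgCurvTensor {V : Type*} [NormedAddCommGroup V] [InnerProductSpace ℝ V]
    (R : V → V → V → V → ℝ) : Prop where
  linear_fst : ∀ y z w, IsLinearMap ℝ fun x => R x y z w
  linear_snd : ∀ x z w, IsLinearMap ℝ fun y => R x y z w
  linear_trd : ∀ x y w, IsLinearMap ℝ fun z => R x y z w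
  linear_fth : ∀ x y z, IsLinearMap ℝ fun w => R x y z w
  antisymm_fst : ∀ x y z w, R x y z w = -R y x z w
  antisymm_snd : ∀ x y z w, R x y z w = -R x y w z
  pair_symm : ∀ x y z w, R x y z w = R z w x y
  bianchi : ∀ x y z w, R x y z w + R y z x w + R z x y w = 0

/-- If an algebraic curvature tensor has nonnegative sectional curvatures and the three
vanishing modified isotropic curvature identities hold for an orthonormal four-frame
`v₁, v₂, v₃, v₄`, then the sectional curvature `R(v₁,v₂,v₁,v₂)` vanishes. -/
theorem sectional_curvature_vanishes
    {V : Type*} [NormedAddCommGroup V] [InnerProductSpace ℝ V]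
    (R : V → V → V → V → ℝ) (hR : IsAlgCurvTensor R)
    (hnonneg : ∀ x y : V, 0 ≤ R x y x y)
    (l m : ℝ) (v₁ v₂ v₃ v₄ : V)
    (hv : Orthonormal ℝ ![v₁, v₂, v₃, v₄])
    (h1 : R v₁ v₃ v₁ v₃ + l ^ 2 * R v₁ v₄ v₁ v₄ + m ^ 2 * R v₂ v₃ v₂ v₃
        + l ^ 2 * m ^ 2 * R v₂ v₄ v₂ v₄ - 2 * l * m * R v₁ v₂ v₃ v₄ = 0)
    (h2 : R v₁ v₂ v₁ v₂ + l ^ 2 * R v₂ v₄ v₂ v₄ + m ^ 2 * R v₁ v₃ v₁ v₃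
        + l ^ 2 * m ^ 2 * R v₃ v₄ v₃ v₄ - 2 * l * m * R v₂ v₃ v₁ v₄ = 0)
    (h3 : R v₂ v₃ v₂ v₃ + l ^ 2 * R v₃ v₄ v₃ v₄ + m ^ 2 * R v₁ v₂ v₁ v₂
        + l ^ 2 * m ^ 2 * R v₁ v₄ v₁ v₄ - 2 * l * m * R v₃ v₁ v₂ v₄ = 0) :
    R v₁ v₂ v₁ v₂ = 0 := by
  have B := hR.bianchi v₁ v₂ v₃ v₄
  have n12 := hnonneg v₁ v₂
  have n13 := hnonneg v₁ v₃
  have n14 := hnonneg v₁ v₄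
  have n23 := hnonneg v₂ v₃
  have n24 := hnonneg v₂ v₄
  have n34 := hnonneg v₃ v₄
  have B2 : 2 * l * m * (R v₁ v₂ v₃ v₄ + R v₂ v₃ v₁ v₄ + R v₃ v₁ v₂ v₄) = 0 := by
    rw [B]; ring
  nlinarith [B2, mul_nonneg (sq_nonneg m) n12, mul_nonneg (sq_nonneg m) n13,
    mul_nonneg (sq_nonneg m) n23, mul_nonneg (sq_nonneg l) n14,
    mul_nonneg (sq_nonneg l) n24, mul_nonneg (sq_nonneg l) n34,
    mul_nonneg (mul_nonneg (sq_nonneg l) (sq_nonneg m)) n14,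
    mul_nonneg (mul_nonneg (sq_nonneg l) (sq_nonneg m)) n24,
    mul_nonneg (mul_nonneg (sq_nonneg l) (sq_nonneg m)) n34]
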